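/- For i ≥ 1, the map of ungraded rings φ_i : (A // A(i))_* → (A // A(i-1))_* determined on generators by φ_i(ξ̄_k^{2^l}) = ξ̄_{k-1}^{2^l} for k > 1 and φ_i(ξ̄_1^{2^l}) = 1 is a map of ungraded A(i)_*-comodules. -/

import Mathlib

set_option maxHeartbeats 1000000
set_option synthInstance.maxHeartbeats 400000


open TensorProduct

/-- The mod 2 dual Steenrod algebra on the conjugate generators:
`MvPolynomial.X k` represents `ξ̄_{k+1}`. -/
abbrev DualSteenrod : Type := MvPolynomial ℕ (ZMod 2)

/-- `xb k = ξ̄_k`, with `ξ̄_0 = 1`. -/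
noncomputable def xb : ℕ → DualSteenrod
  | 0 => 1
  | k + 1 => MvPolynomial.X k

/-- The coproduct of the dual Steenrod algebra:
`ψ(ξ̄_k) = Σ_{k₁+k₂=k} ξ̄_{k₁} ⊗ ξ̄_{k₂}^{2^{k₁}}`. -/
noncomputable def psi : DualSteenrod →ₐ[ZMod 2] DualSteenrod ⊗[ZMod 2] DualSteenrod :=
  MvPolynomial.aeval fun n =>
    ∑ p ∈ Finset.range (n + 2), (xb p) ⊗ₜ[ZMod 2] ((xb (n + 1 - p)) ^ (2 ^ p))

/-- The ideal cutting out the quotient Hopf algebra `A(i)_*`. -/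
noncomputable def steenrodIdeal (i : ℕ) : Ideal DualSteenrod :=
  Ideal.span (Set.range fun k : ℕ => (MvPolynomial.X k : DualSteenrod) ^ (2 ^ (i + 1 - k)))

abbrev Aquot (i : ℕ) : Type := DualSteenrod ⧸ steenrodIdeal i

/-- The left `A(i)_*`-coaction on `A_*` (hence, by restriction, on any
`A_*`-subcomodule such as `(A ⫽ A(i))_*` or `(A ⫽ A(i-1))_*`). -/
noncomputable def coact (i : ℕ) : DualSteenrod →ₐ[ZMod 2] Aquot i ⊗[ZMod 2] DualSteenrod :=
  (Algebra.TensorProduct.map (Ideal.Quotient.mkₐ (ZMod 2) (steenrodIdeal i))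
    (AlgHom.id (ZMod 2) DualSteenrod)).comp psi

/-- The ungraded ring map `φ` with `φ(ξ̄_k) = ξ̄_{k-1}` (and `φ(ξ̄_1) = 1`); being a
ring map it sends `ξ̄_k^{2^l}` to `ξ̄_{k-1}^{2^l}`, and it restricts to the map
`φ_i : (A ⫽ A(i))_* → (A ⫽ A(i-1))_*`. -/
noncomputable def phi : DualSteenrod →ₐ[ZMod 2] DualSteenrod :=
  MvPolynomial.aeval fun k => xb k

/-- The subalgebra `(A ⫽ A(i))_* = F₂[ξ̄_1^{2^{i+1}}, …, ξ̄_{i+1}^2, ξ̄_{i+2}, …]`. -/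
noncomputable def AmodAi (i : ℕ) : Subalgebra (ZMod 2) DualSteenrod :=
  Algebra.adjoin (ZMod 2)
    (Set.range fun k : ℕ => (MvPolynomial.X k : DualSteenrod) ^ (2 ^ (i + 1 - k)))

-- auxiliary lemmas

lemma two_eq_zero' {R : Type*} [CommRing R] [Algebra (ZMod 2) R] : (2 : R) = 0 := by
  have : ((2 : ZMod 2) : ZMod 2) = 0 := by decide
  calc (2 : R) = algebraMap (ZMod 2) R 2 := by rw [map_ofNat]
    _ = 0 := by rw [show (2 : ZMod 2) = 0 by decide, map_zero]

lemma sq_add {R : Type*} [CommRing R] [Algebra (ZMod 2) R] (a b : R) :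
    (a + b) ^ 2 = a ^ 2 + b ^ 2 := by
  have h2 : (2 : R) = 0 := two_eq_zero'
  ring_nf
  rw [h2]
  ring

lemma sum_sq {R : Type*} [CommRing R] [Algebra (ZMod 2) R] {ι : Type*} (s : Finset ι)
    (f : ι → R) : (∑ x ∈ s, f x) ^ 2 = ∑ x ∈ s, f x ^ 2 := by
  classical
  induction s using Finset.induction_on with
  | empty => simp
  | insert _ _ h ih => rw [Finset.sum_insert h, Finset.sum_insert h, sq_add, ih]

lemma sum_pow_two_pow {R : Type*} [CommRing R] [Algebra (ZMod 2) R] {ι : Type*} (s : Finset ι)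
    (f : ι → R) (n : ℕ) : (∑ x ∈ s, f x) ^ (2 ^ n) = ∑ x ∈ s, f x ^ (2 ^ n) := by
  induction n with
  | zero => simp
  | succ n ih =>
      rw [pow_succ, pow_mul, ih, sum_sq]
      simp [← pow_mul, ← pow_succ]

lemma phi_xb (m : ℕ) : phi (xb (m + 1)) = xb m := by
  simp [phi, xb]

lemma phi_xb_zero : phi (xb 0) = 1 := by simp [xb]

lemma mk_gen_zero (i k : ℕ) :
    Ideal.Quotient.mk (steenrodIdeal i) ((MvPolynomial.X k : DualSteenrod) ^ (2 ^ (i + 1 - k)))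
      = 0 := by
  rw [Ideal.Quotient.eq_zero_iff_mem]
  exact Ideal.subset_span ⟨k, rfl⟩

lemma coact_X (i k : ℕ) :
    coact i (MvPolynomial.X k) = ∑ p ∈ Finset.range (k + 2),
      (Ideal.Quotient.mk (steenrodIdeal i) (xb p)) ⊗ₜ[ZMod 2] ((xb (k + 1 - p)) ^ (2 ^ p)) := by
  simp only [coact, AlgHom.comp_apply, psi, MvPolynomial.aeval_X, map_sum,
    Algebra.TensorProduct.map_tmul, Ideal.Quotient.mkₐ_eq_mk, AlgHom.id_apply]

noncomputable def Lmap (i : ℕ) : DualSteenrod →ₐ[ZMod 2] Aquot i ⊗[ZMod 2] DualSteenrod :=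
  (Algebra.TensorProduct.map (AlgHom.id (ZMod 2) (Aquot i)) phi).comp (coact i)

noncomputable def Rmap (i : ℕ) : DualSteenrod →ₐ[ZMod 2] Aquot i ⊗[ZMod 2] DualSteenrod :=
  (coact i).comp phi

lemma key (i k : ℕ) :
    Lmap i ((MvPolynomial.X k : DualSteenrod) ^ (2 ^ (i + 1 - k)))
      = Rmap i ((MvPolynomial.X k : DualSteenrod) ^ (2 ^ (i + 1 - k))) := by
  have hL : Lmap i (MvPolynomial.X k) = ∑ p ∈ Finset.range (k + 2),
      (Ideal.Quotient.mk (steenrodIdeal i) (xb p)) ⊗ₜ[ZMod 2]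
        ((phi (xb (k + 1 - p))) ^ (2 ^ p)) := by
    simp only [Lmap, AlgHom.comp_apply, coact_X, map_sum, Algebra.TensorProduct.map_tmul,
      AlgHom.id_apply, map_pow]
  have hLE : Lmap i ((MvPolynomial.X k : DualSteenrod) ^ (2 ^ (i + 1 - k)))
      = ∑ p ∈ Finset.range (k + 2),
        ((Ideal.Quotient.mk (steenrodIdeal i) (xb p)) ^ (2 ^ (i + 1 - k))) ⊗ₜ[ZMod 2]
          (((phi (xb (k + 1 - p))) ^ (2 ^ p)) ^ (2 ^ (i + 1 - k))) := by
    rw [(show ∀ x (n : ℕ), Lmap i (x ^ n) = Lmap i x ^ n from fun x n => (Lmap i).toRingHom.map_pow x n), hL]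
    refine (sum_pow_two_pow (R := Aquot i ⊗[ZMod 2] DualSteenrod) _ _ (i + 1 - k)).trans ?_
    exact Finset.sum_congr rfl fun p _ => Algebra.TensorProduct.tmul_pow _ _ _
  rw [hLE, Finset.sum_range_succ]
  have hmk0 : (Ideal.Quotient.mk (steenrodIdeal i) (xb (k + 1))) ^ (2 ^ (i + 1 - k)) = 0 := by
    rw [← map_pow, Ideal.Quotient.eq_zero_iff_mem]
    exact Ideal.subset_span ⟨k, rfl⟩
  rw [hmk0, TensorProduct.zero_tmul, add_zero]
  -- now compute the right hand side
  cases k with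
  | zero =>
      have h1 : phi ((MvPolynomial.X 0 : DualSteenrod) ^ (2 ^ (i + 1 - 0))) = 1 := by
        rw [map_pow, show (MvPolynomial.X 0 : DualSteenrod) = xb 1 from rfl, phi_xb,
          show xb 0 = 1 from rfl, one_pow]
      rw [Rmap, AlgHom.comp_apply, h1, (show coact i 1 = 1 from (coact i).map_one)]
      have h2 : phi (MvPolynomial.X 0 : DualSteenrod) = 1 := by simp [phi, xb]
      simp [h2, Algebra.TensorProduct.one_def, xb]
  | succ j =>
      have hphiX : phi ((MvPolynomial.X (j + 1) : DualSteenrod) ^ (2 ^ (i + 1 - (j + 1))))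
          = (MvPolynomial.X j : DualSteenrod) ^ (2 ^ (i + 1 - (j + 1))) := by
        rw [map_pow, show (MvPolynomial.X (j+1) : DualSteenrod) = xb (j+2) from rfl, phi_xb]
        rfl
      have hRE : Rmap i ((MvPolynomial.X (j + 1) : DualSteenrod) ^ (2 ^ (i + 1 - (j + 1))))
          = ∑ p ∈ Finset.range (j + 2),
            ((Ideal.Quotient.mk (steenrodIdeal i) (xb p)) ^ (2 ^ (i + 1 - (j + 1)))) ⊗ₜ[ZMod 2]
              (((xb (j + 1 - p)) ^ (2 ^ p)) ^ (2 ^ (i + 1 - (j + 1)))) := by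
        rw [Rmap, AlgHom.comp_apply, hphiX,
          (show ∀ x (n : ℕ), coact i (x ^ n) = coact i x ^ n from fun x n => (coact i).toRingHom.map_pow x n), coact_X]
        refine (sum_pow_two_pow (R := Aquot i ⊗[ZMod 2] DualSteenrod) _ _
          (i + 1 - (j + 1))).trans ?_
        exact Finset.sum_congr rfl fun p _ => Algebra.TensorProduct.tmul_pow _ _ _
      rw [hRE]
      refine Finset.sum_congr rfl fun p hp => ?_
      have hp' : p ≤ j + 1 := by
        simpa [Nat.lt_succ_iff] using Finset.mem_range.mp hp
      have h3 : j + 1 + 1 - p = (j + 1 - p) + 1 := by omega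
      rw [h3, phi_xb]

/-- for `i ≥ 1`, the ungraded ring map
`φ_i : (A ⫽ A(i))_* → (A ⫽ A(i-1))_*`, `ξ̄_k^{2^l} ↦ ξ̄_{k-1}^{2^l}` (`k > 1`),
`ξ̄_1^{2^l} ↦ 1`, is a map of ungraded `A(i)_*`-comodules: it intertwines the
`A(i)_*`-coactions on `(A ⫽ A(i))_*` and `(A ⫽ A(i-1))_*`. -/
theorem stmt5 (i : ℕ) (hi : 1 ≤ i) (a : DualSteenrod) (ha : a ∈ AmodAi i) :
    (TensorProduct.map (LinearMap.id : Aquot i →ₗ[ZMod 2] Aquot i) phi.toLinearMap)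
        (coact i a) = coact i (phi a) := by
  have hmap : ∀ z : Aquot i ⊗[ZMod 2] DualSteenrod,
      (TensorProduct.map (LinearMap.id : Aquot i →ₗ[ZMod 2] Aquot i) phi.toLinearMap) z
        = Algebra.TensorProduct.map (AlgHom.id (ZMod 2) (Aquot i)) phi z := by
    intro z
    induction z with
    | zero => simp
    | tmul x y => simp
    | add x y hx hy => simp [map_add, hx, hy]
  rw [hmap]
  show Lmap i a = Rmap i a
  induction ha using Algebra.adjoin_induction with
  | mem x hx => obtain ⟨k, rfl⟩ := hx; exact key i k
  | algebraMap r => simp [Lmap, Rmap]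
  | add x y hx hy hx' hy' => rw [map_add, map_add, hx', hy']
  | mul x y hx hy hx' hy' => rw [map_mul, map_mul, hx', hy']
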